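/- For all θ with |θ| < π/2 and all μ with 0 ≤ μ ≤ 1, one has cos(μθ) ≥ (cos θ)^μ. -/
import Mathlib

open Real

theorem stmt_0 (θ μ : ℝ) (hθ : |θ| < π / 2) (hμ0 : 0 ≤ μ) (hμ1 : μ ≤ 1) :
    Real.cos (μ * θ) ≥ (Real.cos θ) ^ μ := by
  have hθ' := abs_lt.mp hθ
  have hcos : 0 < Real.cos θ := Real.cos_pos_of_mem_Ioo ⟨hθ'.1, hθ'.2⟩
  have hmem : θ ∈ Set.Icc (-(π/2)) (π/2) := ⟨hθ'.1.le, hθ'.2.le⟩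
  have h0mem : (0:ℝ) ∈ Set.Icc (-(π/2)) (π/2) := by
    constructor <;> [linarith [pi_pos]; linarith [pi_pos]]
  have hconc := strictConcaveOn_cos_Icc.concaveOn.2 hmem h0mem hμ0 (sub_nonneg.mpr hμ1)
    (by ring)
  simp only [smul_eq_mul, mul_zero, add_zero, Real.cos_zero, mul_one] at hconc
  -- hconc : μ * cos θ + (1 - μ) ≤ cos (μ * θ)
  have hgm := Real.geom_mean_le_arith_mean2_weighted hμ0 (by linarith : (0:ℝ) ≤ 1 - μ)
    hcos.le (zero_le_one) (by ring)
  rw [Real.one_rpow, mul_one] at hgm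
  calc (Real.cos θ) ^ μ ≤ μ * Real.cos θ + (1 - μ) * 1 := hgm
    _ ≤ Real.cos (μ * θ) := by linarith
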